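/- Let $m, d \geq 1$ and define, for $j \in \{0, 1, \dots, m\}$, the monomials $Z_j = X^{\binom{m+1}{2} - \binom{j+1}{2} + 2md} Y^{m+1}$. Define $W(X,Y) = \frac{\sum_{\sigma \in S_m} X^{-\ell(\sigma)} \prod_{j \in \mathrm{Des}(\sigma)} Z_j}{\prod_{j=0}^m (1 - Z_j)}$, where $\ell$ is the Coxeter (inversion) length on the symmetric group $S_m$ and $\mathrm{Des}(\sigma) = \{i \in [m-1] : \sigma(i) > \sigma(i+1)\}$. Then $W(X^{-1}, Y^{-1}) = (-1)^{m+1} X^{m^2 + 4md} Y^{2(m+1)} W(X,Y)$. -/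

import Mathlib

/-- The value of the permutation `σ` at the (0-based) position `i`, as a natural
number (0-based); junk value `0` out of range. -/
def pval (m : ℕ) (σ : Equiv.Perm (Fin m)) (i : ℕ) : ℕ :=
  if h : i < m then (σ ⟨i, h⟩ : ℕ) else 0

/-- The Coxeter (inversion) length of `σ ∈ S_m`. -/
def permLen (m : ℕ) (σ : Equiv.Perm (Fin m)) : ℕ :=
  ((Finset.univ : Finset (Fin m × Fin m)).filter
    (fun p => p.1 < p.2 ∧ σ p.2 < σ p.1)).card

/-- The descent set of `σ ∈ S_m`, recorded with 0-based positions: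
`k ∈ permDes m σ` iff `σ` has a descent at the 1-based position `k+1`. -/
def permDes (m : ℕ) (σ : Equiv.Perm (Fin m)) : Finset ℕ :=
  (Finset.range (m - 1)).filter (fun k => pval m σ (k + 1) < pval m σ k)

/-- The monomial `Z_j = X^{C(m+1,2) - C(j+1,2) + 2md} Y^{m+1}`, `j ∈ {0,…,m}`. -/
def Zmon (m d : ℕ) (X Y : ℚ) (j : ℕ) : ℚ :=
  X ^ ((m + 1).choose 2 - (j + 1).choose 2 + 2 * m * d) * Y ^ (m + 1)

/-- `W(X,Y) = (∑_{σ ∈ S_m} X^{-ℓ(σ)} ∏_{j ∈ Des σ} Z_j) / ∏_{j=0}^m (1 - Z_j)`. -/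
noncomputable def Wheis (m d : ℕ) (X Y : ℚ) : ℚ :=
  (∑ σ : Equiv.Perm (Fin m),
      X ^ (-(permLen m σ : ℤ)) * ∏ k ∈ permDes m σ, Zmon m d X Y (k + 1)) /
    ∏ j ∈ Finset.range (m + 1), (1 - Zmon m d X Y j)


lemma choose_two_add (m : ℕ) : m.choose 2 + (m+1).choose 2 = m * m := by
  induction m with
  | zero => simp
  | succ n ih =>
    have h1 : (n+1+1).choose 2 = (n+1) + (n+1).choose 2 := by
      rw [Nat.choose_succ_succ (n+1) 1, Nat.choose_one_right]
    have h1' : (n+1).choose 2 = n + n.choose 2 := by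
      rw [Nat.choose_succ_succ n 1, Nat.choose_one_right]
    have h2 : (n+1)*(n+1) = n*n + 2*n + 1 := by ring
    omega

lemma two_mul_choose_two (m : ℕ) : 2 * m.choose 2 = m * m - m := by
  have h := choose_two_add m
  have h1 : (m+1).choose 2 = m + m.choose 2 := by
    rw [Nat.choose_succ_succ m 1, Nat.choose_one_right]
  have h2 : m ≤ m * m := by nlinarith
  omega

open Finset in
lemma card_lt_pairs (m : ℕ) :
    ((Finset.univ : Finset (Fin m × Fin m)).filter (fun p => p.1 < p.2)).card = m.choose 2 := by
  classical
  set A := (Finset.univ : Finset (Fin m × Fin m)).filter (fun p => p.1 < p.2) with hA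
  set B := (Finset.univ : Finset (Fin m × Fin m)).filter (fun p => p.2 < p.1) with hB
  have hcardAB : A.card = B.card := by
    apply Finset.card_bij (fun p _ => Prod.swap p)
    · rintro ⟨a, b⟩ hp
      simp only [hA, hB, mem_filter, mem_univ, true_and] at *
      exact hp
    · rintro ⟨a, b⟩ _ ⟨c, e⟩ _ h
      simpa [Prod.ext_iff, and_comm] using h
    · rintro ⟨a, b⟩ hp
      refine ⟨⟨b, a⟩, ?_, rfl⟩
      simp only [hA, hB, mem_filter, mem_univ, true_and] at *
      exact hp
  have hdisj : Disjoint A B := by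
    rw [Finset.disjoint_left]
    rintro ⟨a, b⟩ ha hb
    simp only [hA, hB, mem_filter, mem_univ, true_and] at ha hb
    exact absurd hb (not_lt.mpr ha.le)
  have hunion : A ∪ B = (Finset.univ : Finset (Fin m × Fin m)).filter (fun p => p.1 ≠ p.2) := by
    rw [hA, hB, ← Finset.filter_or]
    apply Finset.filter_congr
    rintro ⟨a, b⟩ _
    simp only [ne_eq]
    constructor
    · rintro (h | h) <;> intro he <;> simp [he] at h <;> exact absurd h (lt_irrefl _)
    · intro h; exact lt_or_gt_of_ne h
  have hcardU : (A ∪ B).card = m * m - m := by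
    rw [hunion]
    have : (Finset.univ : Finset (Fin m × Fin m)).filter (fun p => p.1 ≠ p.2)
        = (Finset.univ : Finset (Fin m)).offDiag := by
      ext p; simp
    rw [this, Finset.offDiag_card, Finset.card_univ, Fintype.card_fin]
  have := Finset.card_union_of_disjoint hdisj
  have := two_mul_choose_two m
  omega

open Finset in
lemma len_add (m : ℕ) (σ : Equiv.Perm (Fin m)) :
    permLen m (Fin.revPerm * σ) + permLen m σ = m.choose 2 := by
  classical
  unfold permLen
  have hA : (Finset.univ : Finset (Fin m × Fin m)).filter
        (fun p => p.1 < p.2 ∧ (Fin.revPerm * σ : Equiv.Perm (Fin m)) p.2 < (Fin.revPerm * σ : Equiv.Perm (Fin m)) p.1)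
      = Finset.univ.filter (fun p => p.1 < p.2 ∧ σ p.1 < σ p.2) := by
    apply Finset.filter_congr
    rintro ⟨a, b⟩ _
    simp only [Equiv.Perm.mul_apply, Fin.revPerm_apply, Fin.rev_lt_rev]
  rw [hA]
  have hdisj : Disjoint
      (Finset.univ.filter (fun p : Fin m × Fin m => p.1 < p.2 ∧ σ p.1 < σ p.2))
      (Finset.univ.filter (fun p : Fin m × Fin m => p.1 < p.2 ∧ σ p.2 < σ p.1)) := by
    rw [Finset.disjoint_left]
    rintro ⟨a, b⟩ ha hb
    simp only [mem_filter, mem_univ, true_and] at ha hb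
    exact absurd hb.2 (not_lt.mpr ha.2.le)
  rw [← Finset.card_union_of_disjoint hdisj, ← Finset.filter_or, ← card_lt_pairs m]
  congr 1
  apply Finset.filter_congr
  rintro ⟨a, b⟩ _
  simp only
  constructor
  · rintro (⟨h, _⟩ | ⟨h, _⟩) <;> exact h
  · intro h
    rcases lt_or_gt_of_ne (fun he => absurd (σ.injective he) h.ne) with h' | h'
    · exact Or.inl ⟨h, h'⟩
    · exact Or.inr ⟨h, h'⟩

lemma des_rev (m : ℕ) (σ : Equiv.Perm (Fin m)) :
    permDes m (Fin.revPerm * σ) = (Finset.range (m-1)) \ permDes m σ := by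
  ext k
  simp only [permDes, Finset.mem_filter, Finset.mem_sdiff, Finset.mem_range]
  by_cases hk : k < m - 1
  · simp only [hk, true_and, not_and, true_implies]
    have hk1 : k + 1 < m := by omega
    have hk0 : k < m := by omega
    have hne : (σ ⟨k+1, hk1⟩ : ℕ) ≠ (σ ⟨k, hk0⟩ : ℕ) := by
      intro h
      have := σ.injective (Fin.val_injective h)
      simp [Fin.ext_iff] at this
    have ha : (σ ⟨k+1, hk1⟩ : ℕ) < m := (σ _).isLt
    have hb : (σ ⟨k, hk0⟩ : ℕ) < m := (σ _).isLt
    rw [pval, pval, pval, pval, dif_pos hk1, dif_pos hk0, dif_pos hk1, dif_pos hk0]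
    simp only [Equiv.Perm.mul_apply, Fin.revPerm_apply, Fin.val_rev]
    omega
  · simp [hk]

/-- the functional equation
`W(X⁻¹,Y⁻¹) = (-1)^{m+1} X^{m²+4md} Y^{2(m+1)} W(X,Y)` for the local
pro-isomorphic zeta function of `𝓗_m ⊗ 𝓞_K`. -/
theorem stmt14 (m d : ℕ) (hm : 1 ≤ m) (hd : 1 ≤ d)
    (X Y : ℚ) (hX : X ≠ 0) (hY : Y ≠ 0) :
    Wheis m d X⁻¹ Y⁻¹ =
      (-1 : ℚ) ^ (m + 1) * X ^ (m ^ 2 + 4 * m * d) * Y ^ (2 * (m + 1)) *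
        Wheis m d X Y := by
  classical
  have hZne : ∀ j, Zmon m d X Y j ≠ 0 := fun j =>
    mul_ne_zero (pow_ne_zero _ hX) (pow_ne_zero _ hY)
  have hZinv : ∀ j, Zmon m d X⁻¹ Y⁻¹ j = (Zmon m d X Y j)⁻¹ := by
    intro j
    simp only [Zmon, mul_inv, inv_pow]
  set P := ∏ k ∈ Finset.range (m-1), Zmon m d X Y (k+1) with hP
  set Q := ∏ j ∈ Finset.range (m+1), Zmon m d X Y j with hQ
  have hPne : P ≠ 0 := Finset.prod_ne_zero_iff.mpr fun k _ => hZne _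
  have hQne : Q ≠ 0 := Finset.prod_ne_zero_iff.mpr fun k _ => hZne _
  have hD : ∏ j ∈ Finset.range (m + 1), (1 - Zmon m d X⁻¹ Y⁻¹ j)
      = (-1 : ℚ) ^ (m+1) * Q⁻¹ * ∏ j ∈ Finset.range (m + 1), (1 - Zmon m d X Y j) := by
    have h : ∀ j ∈ Finset.range (m+1), (1 - Zmon m d X⁻¹ Y⁻¹ j)
        = (-1) * (Zmon m d X Y j)⁻¹ * (1 - Zmon m d X Y j) := by
      intro j _
      rw [hZinv j]
      field_simp [hZne j]
      ring
    rw [Finset.prod_congr rfl h, Finset.prod_mul_distrib, Finset.prod_mul_distrib,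
      Finset.prod_const, Finset.card_range]
    have hcollapse : ∏ x ∈ Finset.range (m+1), (Zmon m d X Y x)⁻¹ = Q⁻¹ := by
      rw [hQ, Finset.prod_inv_distrib]
    rw [hcollapse]
  have hN : (∑ σ : Equiv.Perm (Fin m),
        (X⁻¹) ^ (-(permLen m σ : ℤ)) * ∏ k ∈ permDes m σ, Zmon m d X⁻¹ Y⁻¹ (k + 1))
      = X ^ (m.choose 2) * P⁻¹ *
        ∑ σ : Equiv.Perm (Fin m),
          X ^ (-(permLen m σ : ℤ)) * ∏ k ∈ permDes m σ, Zmon m d X Y (k + 1) := by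
    rw [Finset.mul_sum]
    rw [← Equiv.sum_comp (Equiv.mulLeft (Fin.revPerm : Equiv.Perm (Fin m)))
      (fun σ => (X⁻¹) ^ (-(permLen m σ : ℤ)) * ∏ k ∈ permDes m σ, Zmon m d X⁻¹ Y⁻¹ (k + 1))]
    simp only [Equiv.coe_mulLeft]
    apply Finset.sum_congr rfl
    intro σ _
    have hlen := len_add m σ
    have hsub : permDes m σ ⊆ Finset.range (m-1) := Finset.filter_subset _ _
    rw [des_rev m σ]
    have hBne : (∏ k ∈ permDes m σ, Zmon m d X Y (k + 1)) ≠ 0 :=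
      Finset.prod_ne_zero_iff.mpr fun k _ => hZne _
    have hprod : ∏ k ∈ Finset.range (m-1) \ permDes m σ, Zmon m d X⁻¹ Y⁻¹ (k + 1)
        = P⁻¹ * ∏ k ∈ permDes m σ, Zmon m d X Y (k + 1) := by
      have h2 : (∏ k ∈ Finset.range (m-1) \ permDes m σ, Zmon m d X Y (k+1)) *
          ∏ k ∈ permDes m σ, Zmon m d X Y (k+1)
          = ∏ k ∈ Finset.range (m-1), Zmon m d X Y (k+1) := Finset.prod_sdiff hsub
      have h3 : ∏ k ∈ Finset.range (m-1) \ permDes m σ, Zmon m d X Y (k + 1)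
          = P * (∏ k ∈ permDes m σ, Zmon m d X Y (k + 1))⁻¹ := by
        rw [eq_mul_inv_iff_mul_eq₀ hBne, hP]
        exact h2
      calc ∏ k ∈ Finset.range (m-1) \ permDes m σ, Zmon m d X⁻¹ Y⁻¹ (k + 1)
          = (∏ k ∈ Finset.range (m-1) \ permDes m σ, Zmon m d X Y (k + 1))⁻¹ := by
            rw [← Finset.prod_inv_distrib]
            exact Finset.prod_congr rfl fun k _ => hZinv _
        _ = _ := by rw [h3, mul_inv, inv_inv]
    have hlpow : (X⁻¹) ^ (-(permLen m (Fin.revPerm * σ) : ℤ))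
        = X ^ (m.choose 2) * X ^ (-(permLen m σ : ℤ)) := by
      rw [inv_zpow, ← zpow_neg, neg_neg]
      have he : (permLen m (Fin.revPerm * σ) : ℤ) = (m.choose 2 : ℤ) + (-(permLen m σ : ℤ)) := by
        omega
      rw [he, zpow_add₀ hX, zpow_natCast]
    rw [hprod, hlpow]
    ring
  have hQsplit : Q = P * Zmon m d X Y 0 * Zmon m d X Y m := by
    have key : ∀ (f : ℕ → ℚ), ∏ j ∈ Finset.range m, f j
        = (∏ k ∈ Finset.range (m-1), f (k+1)) * f 0 := by
      intro f
      conv_lhs => rw [show m = (m-1)+1 from by omega]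
      rw [Finset.prod_range_succ']
    rw [hQ, Finset.prod_range_succ, key, hP]
  have hkey : (X : ℚ) ^ (m.choose 2) * (Zmon m d X Y 0 * Zmon m d X Y m)
      = X ^ (m ^ 2 + 4 * m * d) * Y ^ (2 * (m + 1)) := by
    rw [Zmon, Zmon]
    have e2 : m ^ 2 + 4 * m * d = m.choose 2 + ((m + 1).choose 2 - (0+1).choose 2 + 2 * m * d)
        + ((m + 1).choose 2 - (m + 1).choose 2 + 2 * m * d) := by
      have h := choose_two_add m
      have h4 : 4 * m * d = 2 * m * d + 2 * m * d := by ring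
      simp only [show (0 + 1 : ℕ).choose 2 = 0 from rfl, Nat.sub_zero, Nat.sub_self]
      rw [pow_two]
      omega
    rw [e2]
    ring
  simp only [Wheis]
  rw [hN, hD, mul_div_mul_comm, hQsplit]
  have hfac : (X ^ (m.choose 2) * P⁻¹) /
        ((-1 : ℚ) ^ (m+1) * (P * Zmon m d X Y 0 * Zmon m d X Y m)⁻¹)
      = (-1 : ℚ) ^ (m + 1) * X ^ (m ^ 2 + 4 * m * d) * Y ^ (2 * (m + 1)) := by
    have hne1 : ((-1 : ℚ)^(m+1)) ≠ 0 := pow_ne_zero _ (by norm_num)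
    rw [mul_assoc ((-1 : ℚ)^(m+1)), ← hkey]
    field_simp [hZne 0, hZne m]
    have hsq : ((-1:ℚ))^(m+1) * ((-1:ℚ))^(m+1) = 1 := by
      rw [← pow_add]
      exact Even.neg_one_pow ⟨m+1, by ring⟩
    linear_combination -hsq
  rw [hfac]
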